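/- Along the steady shock polar parametrization of the detachment point, where w^d = (1/2)·(τ(τ²-1)h' - 2h)^{1/2}(( τ²-1)h' + 2h)^{1/2} / (τ(τ+1)h' + h) and M_∞² = 2h(2h + τ(τ+1)h')/(2h + (τ²-1)h') with h, h' evaluated at τ > 1, both w^d and M_∞² are strictly increasing functions of τ on (1, ∞). -/

import Mathlib

open Set

/-- Polytropic enthalpy: `h(τ) = (τ^(γ-1) - 1)/(γ-1)` for `γ > 1`, `log τ` for `γ = 1`. -/
noncomputable def enthalpy (γ τ : ℝ) : ℝ :=
  if γ = 1 then Real.log τ else (τ ^ (γ - 1) - 1) / (γ - 1)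

/-- Detachment-point parametrization of the deflection tangent:
`w^d(τ) = (1/2)(τ(τ²-1)h' - 2h)^{1/2}((τ²-1)h' + 2h)^{1/2}/(τ(τ+1)h' + h)`,
with `h` and `h' = τ^(γ-2)` evaluated at `τ`. -/
noncomputable def wD (γ τ : ℝ) : ℝ :=
  (1 / 2) * Real.sqrt (τ * (τ ^ 2 - 1) * τ ^ (γ - 2) - 2 * enthalpy γ τ) *
      Real.sqrt ((τ ^ 2 - 1) * τ ^ (γ - 2) + 2 * enthalpy γ τ) /
    (τ * (τ + 1) * τ ^ (γ - 2) + enthalpy γ τ)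

/-- Detachment-point parametrization of the squared upstream Mach number:
`M_∞²(τ) = 2h(2h + τ(τ+1)h')/(2h + (τ²-1)h')`. -/
noncomputable def MinfSqD (γ τ : ℝ) : ℝ :=
  2 * enthalpy γ τ * (2 * enthalpy γ τ + τ * (τ + 1) * τ ^ (γ - 2)) /
    (2 * enthalpy γ τ + (τ ^ 2 - 1) * τ ^ (γ - 2))

lemma enthalpy_one (γ : ℝ) : enthalpy γ 1 = 0 := by
  unfold enthalpy
  split <;> simp [Real.one_rpow]

lemma hasDerivAt_enthalpy (γ : ℝ) {x : ℝ} (hx : 0 < x) :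
    HasDerivAt (enthalpy γ) (x ^ (γ - 2)) x := by
  rcases eq_or_ne γ 1 with h1 | h1
  · have : HasDerivAt Real.log x⁻¹ x := Real.hasDerivAt_log hx.ne'
    have hfun : enthalpy γ = Real.log := by funext y; simp [enthalpy, h1]
    rw [hfun]
    convert this using 1
    rw [h1]
    norm_num
    exact Real.rpow_neg_one x
  · have h0 : HasDerivAt (fun y : ℝ => (y ^ (γ - 1) - 1) / (γ - 1))
        (((γ - 1) * x ^ (γ - 1 - 1)) / (γ - 1)) x :=
      (((Real.hasDerivAt_rpow_const (p := γ - 1) (Or.inl hx.ne'))).sub_const 1).div_const (γ - 1)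
    have hfun : enthalpy γ = fun y : ℝ => (y ^ (γ - 1) - 1) / (γ - 1) := by
      funext y; simp [enthalpy, h1]
    rw [hfun]
    convert h0 using 1
    have hγ1 : γ - 1 ≠ 0 := sub_ne_zero.mpr h1
    rw [show γ - 1 - 1 = γ - 2 by ring]
    field_simp
lemma enthalpy_rel (γ : ℝ) {x : ℝ} (hx : 0 < x) :
    x * x ^ (γ - 2) = 1 + (γ - 1) * enthalpy γ x := by
  have hxp : x * x ^ (γ - 2) = x ^ (γ - 1) := by
    nth_rewrite 1 [← Real.rpow_one x]
    rw [← Real.rpow_add hx]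
    ring_nf
  rw [hxp]
  rcases eq_or_ne γ 1 with h1 | h1
  · simp [h1, Real.rpow_zero]
  · have hγ1 : γ - 1 ≠ 0 := sub_ne_zero.mpr h1
    simp only [enthalpy, h1, if_neg h1, if_false]
    field_simp
    ring

lemma strictMonoOn_aux (f f' : ℝ → ℝ) (hd : ∀ x ∈ Ici (1:ℝ), HasDerivAt f (f' x) x)
    (hpos : ∀ x ∈ Ioi (1:ℝ), 0 < f' x) : StrictMonoOn f (Ici 1) := by
  apply strictMonoOn_of_deriv_pos (convex_Ici 1)
    (fun x hx => (hd x hx).continuousAt.continuousWithinAt)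
  intro x hx
  rw [interior_Ici] at hx
  rw [(hd x (Ioi_subset_Ici_self hx)).deriv]
  exact hpos x hx

lemma enthalpy_pos (γ : ℝ) {x : ℝ} (hx : 1 < x) : 0 < enthalpy γ x := by
  have := strictMonoOn_aux (enthalpy γ) (fun y => y ^ (γ - 2))
    (fun y hy => hasDerivAt_enthalpy γ (lt_of_lt_of_le one_pos hy))
    (fun y hy => Real.rpow_pos_of_pos (lt_trans one_pos hy) _)
  have h0 := this (self_mem_Ici) (mem_Ici.mpr (le_of_lt hx)) hx
  rwa [enthalpy_one] at h0

lemma enthalpy_le (γ : ℝ) (hγ : 1 ≤ γ) {x : ℝ} (hx : 1 < x) :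
    enthalpy γ x ≤ (x - 1) * (x * x ^ (γ - 2)) := by
  have key : StrictMonoOn (fun y : ℝ => (y - 1) * (y * y ^ (γ - 2)) - enthalpy γ y) (Ici 1) := by
    apply strictMonoOn_aux _
      (fun y => γ * (y - 1) * y ^ (γ - 2))
    · intro y hy
      have hy0 : (0:ℝ) < y := lt_of_lt_of_le one_pos hy
      have hP : HasDerivAt (fun z : ℝ => z ^ (γ - 2)) ((γ - 2) * y ^ (γ - 3)) y := by
        have := Real.hasDerivAt_rpow_const (x := y) (p := γ - 2) (Or.inl hy0.ne')
        rwa [show γ - 2 - 1 = γ - 3 by ring] at this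
      have hq : y * y ^ (γ - 3) = y ^ (γ - 2) := by
        nth_rewrite 1 [← Real.rpow_one y]
        rw [← Real.rpow_add hy0]
        ring_nf
      have h0 := (((hasDerivAt_id y).sub_const 1).mul
        ((hasDerivAt_id y).mul hP)).sub (hasDerivAt_enthalpy γ hy0)
      refine h0.congr_deriv (Eq.symm ?_)
      simp only [id, Pi.mul_apply]
      linear_combination (2 - γ) * (y - 1) * hq
    · intro y hy
      have hy0 : (0:ℝ) < y := lt_trans one_pos hy
      have := Real.rpow_pos_of_pos hy0 (γ - 2)
      have hγ0 : (0:ℝ) < γ := lt_of_lt_of_le one_pos hγ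
      have : 0 < y - 1 := sub_pos.mpr hy
      positivity
  have h0 := key (self_mem_Ici) (mem_Ici.mpr (le_of_lt hx)) hx
  simp only [enthalpy_one] at h0
  nlinarith [h0]

lemma keyW (t h m : ℝ) (ht : 1 < t) (hh : 0 < h) (hm : 1 ≤ m) (hs : h ≤ (t - 1) * m) :
    0 < 2 * (2 * t - 1) * h ^ 2 + (t + 1) * h * (3 * (t - 1) * m - 2)
      + (t + 1) ^ 2 * (t - 1) * m ^ 2 := by
  have hm0 : (0:ℝ) ≤ m := le_trans zero_le_one hm
  nlinarith [mul_nonneg (sub_nonneg.2 hs) hh.le, sub_nonneg.2 hs,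
    mul_nonneg (mul_nonneg (sub_nonneg.2 ht.le) hm0)
      (sub_nonneg.2 (by nlinarith : (2:ℝ) ≤ (t+1)*m)),
    sq_nonneg h, mul_pos hh hh]

set_option maxHeartbeats 1000000 in
lemma wD_deriv (γ : ℝ) (hγ : 1 ≤ γ) {τ : ℝ} (hτ : 1 < τ) :
    ∃ d, HasDerivAt (wD γ) d τ ∧ 0 < d := by
  have hfun : wD γ = fun x : ℝ => 1 / 2 * Real.sqrt (x * (x ^ 2 - 1) * x ^ (γ - 2)
      - 2 * enthalpy γ x) * Real.sqrt ((x ^ 2 - 1) * x ^ (γ - 2) + 2 * enthalpy γ x)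
      / (x * (x + 1) * x ^ (γ - 2) + enthalpy γ x) := rfl
  rw [hfun]
  have hτ0 : (0:ℝ) < τ := lt_trans one_pos hτ
  have hE := hasDerivAt_enthalpy γ hτ0
  have hP : HasDerivAt (fun z : ℝ => z ^ (γ - 2)) ((γ - 2) * τ ^ (γ - 3)) τ := by
    have := Real.hasDerivAt_rpow_const (x := τ) (p := γ - 2) (Or.inl hτ0.ne')
    rwa [show γ - 2 - 1 = γ - 3 by ring] at this
  set h : ℝ := enthalpy γ τ with hh_def
  set p : ℝ := τ ^ (γ - 2) with hp_def
  set q : ℝ := τ ^ (γ - 3) with hq_def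
  have hq : τ * q = p := by
    rw [hq_def, hp_def]
    nth_rewrite 1 [← Real.rpow_one τ]
    rw [← Real.rpow_add hτ0]; ring_nf
  have hrel : τ * p = 1 + (γ - 1) * h := enthalpy_rel γ hτ0
  have hhpos : 0 < h := enthalpy_pos γ hτ
  have hppos : 0 < p := Real.rpow_pos_of_pos hτ0 _
  have hle : h ≤ (τ - 1) * (τ * p) := enthalpy_le γ hγ hτ
  set A : ℝ := τ * (τ ^ 2 - 1) * p - 2 * h with hA_def
  set B : ℝ := (τ ^ 2 - 1) * p + 2 * h with hB_def
  set C : ℝ := τ * (τ + 1) * p + h with hC_def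
  set dA : ℝ := (3 * τ ^ 2 - 1) * p + (γ - 2) * (τ ^ 3 - τ) * q - 2 * p with hdA_def
  set dB : ℝ := 2 * τ * p + (γ - 2) * (τ ^ 2 - 1) * q + 2 * p with hdB_def
  set dC : ℝ := (2 * τ + 1) * p + (γ - 2) * (τ ^ 2 + τ) * q + p with hdC_def
  have hApos : 0 < A := by
    have h1 : (0:ℝ) ≤ (τ + 1) * ((τ - 1) * (τ * p) - h) :=
      mul_nonneg (by linarith) (sub_nonneg.2 hle)
    rw [hA_def]; nlinarith [h1, hhpos]
  have hBpos : 0 < B := by rw [hB_def]; nlinarith [hppos, hhpos]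
  have hCpos : 0 < C := by rw [hC_def]; nlinarith [hppos, hhpos]
  set sA : ℝ := Real.sqrt A with hsA_def
  set sB : ℝ := Real.sqrt B with hsB_def
  have hsApos : 0 < sA := Real.sqrt_pos.2 hApos
  have hsBpos : 0 < sB := Real.sqrt_pos.2 hBpos
  have hsA2 : sA * sA = A := Real.mul_self_sqrt hApos.le
  have hsB2 : sB * sB = B := Real.mul_self_sqrt hBpos.le
  have hAd : HasDerivAt (fun x : ℝ => x * (x ^ 2 - 1) * x ^ (γ - 2) - 2 * enthalpy γ x) dA τ := by
    have h0 := (((hasDerivAt_id τ).mul ((hasDerivAt_pow 2 τ).sub_const 1)).mul hP).sub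
      (hE.const_mul 2)
    refine h0.congr_deriv (Eq.symm ?_)
    simp only [id, Pi.mul_apply]
    push_cast
    ring
  have hBd : HasDerivAt (fun x : ℝ => (x ^ 2 - 1) * x ^ (γ - 2) + 2 * enthalpy γ x) dB τ := by
    have h0 := (((hasDerivAt_pow 2 τ).sub_const 1).mul hP).add (hE.const_mul 2)
    refine h0.congr_deriv (Eq.symm ?_)
    push_cast
    ring
  have hCd : HasDerivAt (fun x : ℝ => x * (x + 1) * x ^ (γ - 2) + enthalpy γ x) dC τ := by
    have h0 := (((hasDerivAt_id τ).mul ((hasDerivAt_id τ).add_const 1)).mul hP).add hE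
    refine h0.congr_deriv (Eq.symm ?_)
    simp only [id, Pi.mul_apply]
    ring
  have hsAd : HasDerivAt (fun x : ℝ =>
      Real.sqrt (x * (x ^ 2 - 1) * x ^ (γ - 2) - 2 * enthalpy γ x)) (dA / (2 * sA)) τ :=
    hAd.sqrt hApos.ne'
  have hsBd : HasDerivAt (fun x : ℝ =>
      Real.sqrt ((x ^ 2 - 1) * x ^ (γ - 2) + 2 * enthalpy γ x)) (dB / (2 * sB)) τ :=
    hBd.sqrt hBpos.ne'
  have hwd := ((hsAd.const_mul (1/2 : ℝ)).mul hsBd).div hCd hCpos.ne'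
  refine ⟨_, hwd, ?_⟩
  apply div_pos ?_ (pow_pos hCpos 2)
  have hNpos : 0 < (dA * B + A * dB) * C - 2 * A * B * dC := by
    have hm1 : (1:ℝ) ≤ τ * p := by nlinarith [hrel, mul_nonneg (sub_nonneg.2 hγ) hhpos.le]
    have hW := keyW τ h (τ * p) hτ hhpos hm1 hle
    have hid : ((dA * B + A * dB) * C - 2 * A * B * dC) * τ
        = (τ + 1) ^ 2 * p * (2 * (2 * τ - 1) * h ^ 2
          + (τ + 1) * h * (3 * (τ - 1) * (τ * p) - 2) + (τ + 1) ^ 2 * (τ - 1) * (τ * p) ^ 2) := by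
      rw [hdA_def, hdB_def, hdC_def, hA_def, hB_def, hC_def]
      linear_combination (2 * (γ - 2) * h ^ 2 * (τ + 1) ^ 3) * hq
        + (-(2:ℝ) * h * p * (τ + 1) ^ 3) * hrel
    have hpos2 : 0 < ((dA * B + A * dB) * C - 2 * A * B * dC) * τ := by
      rw [hid]
      exact mul_pos (mul_pos (pow_pos (by linarith : (0:ℝ) < τ + 1) 2) hppos) hW
    exact pos_of_mul_pos_left hpos2 hτ0.le
  have hkey : (1 / 2 * (dA / (2 * sA)) * sB + 1 / 2 * sA * (dB / (2 * sB))) * C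
      - 1 / 2 * sA * sB * dC
      = ((dA * (sB * sB) + (sA * sA) * dB) * C - 2 * (sA * sA) * (sB * sB) * dC)
        / (4 * sA * sB) := by
    field_simp
    ring
  change 0 < (1 / 2 * (dA / (2 * sA)) * sB + 1 / 2 * sA * (dB / (2 * sB))) * C - 1 / 2 * sA * sB * dC
  rw [hkey, hsA2, hsB2]
  exact div_pos hNpos (by positivity)

set_option maxHeartbeats 1000000 in
lemma MinfSqD_deriv (γ : ℝ) (hγ : 1 ≤ γ) {τ : ℝ} (hτ : 1 < τ) :
    ∃ d, HasDerivAt (MinfSqD γ) d τ ∧ 0 < d := by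
  have hfun : MinfSqD γ = fun x : ℝ => 2 * enthalpy γ x
      * (2 * enthalpy γ x + x * (x + 1) * x ^ (γ - 2))
      / (2 * enthalpy γ x + (x ^ 2 - 1) * x ^ (γ - 2)) := rfl
  rw [hfun]
  have hτ0 : (0:ℝ) < τ := lt_trans one_pos hτ
  have hE := hasDerivAt_enthalpy γ hτ0
  have hP : HasDerivAt (fun z : ℝ => z ^ (γ - 2)) ((γ - 2) * τ ^ (γ - 3)) τ := by
    have := Real.hasDerivAt_rpow_const (x := τ) (p := γ - 2) (Or.inl hτ0.ne')
    rwa [show γ - 2 - 1 = γ - 3 by ring] at this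
  set h : ℝ := enthalpy γ τ with hh_def
  set p : ℝ := τ ^ (γ - 2) with hp_def
  set q : ℝ := τ ^ (γ - 3) with hq_def
  have hq : τ * q = p := by
    rw [hq_def, hp_def]
    nth_rewrite 1 [← Real.rpow_one τ]
    rw [← Real.rpow_add hτ0]; ring_nf
  have hrel : τ * p = 1 + (γ - 1) * h := enthalpy_rel γ hτ0
  have hhpos : 0 < h := enthalpy_pos γ hτ
  have hppos : 0 < p := Real.rpow_pos_of_pos hτ0 _
  have hle : h ≤ (τ - 1) * (τ * p) := enthalpy_le γ hγ hτ
  set D : ℝ := 2 * h + τ * (τ + 1) * p with hD_def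
  set B : ℝ := 2 * h + (τ ^ 2 - 1) * p with hB_def
  set dD : ℝ := 2 * p + ((2 * τ + 1) * p + (γ - 2) * (τ ^ 2 + τ) * q) with hdD_def
  set dB : ℝ := 2 * p + (2 * τ * p + (γ - 2) * (τ ^ 2 - 1) * q) with hdB_def
  have hBpos : 0 < B := by rw [hB_def]; nlinarith [hppos, hhpos]
  have hDd : HasDerivAt (fun x : ℝ => 2 * enthalpy γ x + x * (x + 1) * x ^ (γ - 2)) dD τ := by
    have h0 := (hE.const_mul 2).add (((hasDerivAt_id τ).mul ((hasDerivAt_id τ).add_const 1)).mul hP)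
    refine h0.congr_deriv (Eq.symm ?_)
    simp only [id, Pi.mul_apply]
    ring
  have hBd : HasDerivAt (fun x : ℝ => 2 * enthalpy γ x + (x ^ 2 - 1) * x ^ (γ - 2)) dB τ := by
    have h0 := (hE.const_mul 2).add (((hasDerivAt_pow 2 τ).sub_const 1).mul hP)
    refine h0.congr_deriv (Eq.symm ?_)
    push_cast
    ring
  have hNd : HasDerivAt (fun x : ℝ =>
      2 * enthalpy γ x * (2 * enthalpy γ x + x * (x + 1) * x ^ (γ - 2)))
      (2 * p * D + 2 * h * dD) τ := (hE.const_mul 2).mul hDd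
  have hMd := hNd.div hBd hBpos.ne'
  refine ⟨_, hMd, ?_⟩
  apply div_pos ?_ (pow_pos hBpos 2)
  have hm1 : (1:ℝ) ≤ τ * p := by nlinarith [hrel, mul_nonneg (sub_nonneg.2 hγ) hhpos.le]
  have hW := keyW τ h (τ * p) hτ hhpos hm1 hle
  have hid : ((2 * p * D + 2 * h * dD) * B - 2 * h * D * dB) * τ
      = 2 * p * (2 * (2 * τ - 1) * h ^ 2
        + (τ + 1) * h * (3 * (τ - 1) * (τ * p) - 2) + (τ + 1) ^ 2 * (τ - 1) * (τ * p) ^ 2) := by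
    rw [hdD_def, hdB_def, hD_def, hB_def]
    linear_combination (4 * (γ - 2) * h ^ 2 * (τ + 1)) * hq
      + (-(4:ℝ) * h * p * (τ + 1)) * hrel
  have hpos2 : 0 < ((2 * p * D + 2 * h * dD) * B - 2 * h * D * dB) * τ := by
    rw [hid]
    exact mul_pos (by linarith [hppos] : (0:ℝ) < 2 * p) hW
  exact pos_of_mul_pos_left hpos2 hτ0.le

/-- Along the steady shock polar detachment-point parametrization, both `w^d` and
`M_∞²` are strictly increasing functions of `τ` on `(1, ∞)`. -/
theorem detachment_parametrization_strictMono (γ : ℝ) (hγ : 1 ≤ γ) :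
    StrictMonoOn (wD γ) (Set.Ioi 1) ∧ StrictMonoOn (MinfSqD γ) (Set.Ioi 1) := by
  constructor
  · apply strictMonoOn_of_deriv_pos (convex_Ioi 1)
      (fun x hx => ((wD_deriv γ hγ hx).choose_spec.1).continuousAt.continuousWithinAt)
    intro x hx
    rw [interior_Ioi] at hx
    obtain ⟨d, hd, hdp⟩ := wD_deriv γ hγ hx
    rwa [hd.deriv]
  · apply strictMonoOn_of_deriv_pos (convex_Ioi 1)
      (fun x hx => ((MinfSqD_deriv γ hγ hx).choose_spec.1).continuousAt.continuousWithinAt)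
    intro x hx
    rw [interior_Ioi] at hx
    obtain ⟨d, hd, hdp⟩ := MinfSqD_deriv γ hγ hx
    rwa [hd.deriv]
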